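/- Bounds on conditional weighted entropy for triples: Let f(x₁,x₂,x₃) be a joint probability density on X₁ × X₂ × X₃ with respect to ν₁ ⊗ ν₂ ⊗ ν₃, with pair marginal f₂₃(x₂,x₃) = ∫_{X₁} f dν₁ and conditional density f_{1|23}(x₁|x₂,x₃) = f(x₁,x₂,x₃)/f₂₃(x₂,x₃), and let φ : X₁ × X₂ × X₃ → [0,∞) be a measurable weight function such that all integrals involved converge absolutely. Define ψ₂₃(x₂,x₃) = ∫_{X₁} φ(x₁,x₂,x₃)·f_{1|23}(x₁|x₂,x₃) dν₁(x₁). If ∫ φ·f·(f_{1|23} − 1) dν₁dν₂dν₃ ≤ 0, then −∫ φ(x₁,x₂,x₃)·f(x₁,x₂,x₃)·log f(x₁,x₂,x₃) dν₁dν₂dν₃ ≥ −∫_{X₂×X₃} ψ₂₃(x₂,x₃)·f₂₃(x₂,x₃)·log f₂₃(x₂,x₃) dν₂dν₃, i.e. h^w_φ(X₁,X₂,X₃) ≥ h^w_{ψ₂₃}(X₂,X₃); equality holds if and only if φ·(f_{1|23} − 1) = 0 for f-almost all (x₁,x₂,x₃). -/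

import Mathlib

open MeasureTheory Real

private lemma wslice_aux {X : Type*} [MeasurableSpace X] (ν : Measure X)
    (a b : X → ℝ) (ham : Measurable a) (hbm : Measurable b)
    (ha0 : ∀ x, 0 ≤ a x) (hb0 : ∀ x, 0 ≤ b x)
    (c : ℝ) (hbi : Integrable b ν) (hc : ∫ x, b x ∂ν = c)
    (h1 : Integrable (fun x => a x * b x * log (b x)) ν)
    (h3 : Integrable (fun x => a x * b x * (b x / c - 1)) ν) :
    ((∫ x, a x * b x * log (b x) ∂ν) - (∫ x, a x * (b x / c) ∂ν) * c * log c
        ≤ ∫ x, a x * b x * (b x / c - 1) ∂ν)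
    ∧ ((∫ x, a x * b x * log (b x) ∂ν) - (∫ x, a x * (b x / c) ∂ν) * c * log c
        = ∫ x, a x * b x * (b x / c - 1) ∂ν
        → ∀ᵐ x ∂ν, 0 < b x → a x * (b x / c - 1) = 0)
    ∧ ((∀ᵐ x ∂ν, 0 < b x → a x * (b x / c - 1) = 0)
        → (∫ x, a x * b x * log (b x) ∂ν) = (∫ x, a x * (b x / c) ∂ν) * c * log c) := by
  have hc0 : 0 ≤ c := hc ▸ integral_nonneg hb0
  rcases eq_or_lt_of_le hc0 with hc0' | hcpos
  · -- c = 0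
    have hb0' : b =ᵐ[ν] 0 := by
      refine (integral_eq_zero_iff_of_nonneg hb0 hbi).1 ?_
      rw [hc, ← hc0']
    have hA : ∫ x, a x * b x * log (b x) ∂ν = 0 := by
      rw [show (0:ℝ) = ∫ _x, (0:ℝ) ∂ν from (integral_zero _ _).symm]
      refine integral_congr_ae (hb0'.mono fun x hx => ?_)
      have hx' : b x = 0 := hx
      simp [hx']
    have hC : ∫ x, a x * b x * (b x / c - 1) ∂ν = 0 := by
      rw [show (0:ℝ) = ∫ _x, (0:ℝ) ∂ν from (integral_zero _ _).symm]
      refine integral_congr_ae (hb0'.mono fun x hx => ?_)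
      have hx' : b x = 0 := hx
      simp [hx']
    have hB : (∫ x, a x * (b x / c) ∂ν) * c * log c = 0 := by
      rw [← hc0']; simp
    refine ⟨by rw [hA, hB, hC]; simp, fun _ => ?_, fun _ => by rw [hA, hB]⟩
    filter_upwards [hb0'] with x hx hbx
    have hx' : b x = 0 := hx
    rw [hx'] at hbx; exact absurd hbx (lt_irrefl 0)
  · -- 0 < c
    have key : ∀ x, a x * b x * (log (b x) - log c) ≤ a x * b x * (b x / c - 1) := by
      intro x
      rcases eq_or_lt_of_le (hb0 x) with h | h
      · rw [← h]; simp
      · have hbc : 0 < b x / c := div_pos h hcpos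
        have hld : log (b x) - log c = log (b x / c) := (Real.log_div h.ne' hcpos.ne').symm
        rw [hld]
        exact mul_le_mul_of_nonneg_left (Real.log_le_sub_one_of_pos hbc)
          (mul_nonneg (ha0 x) (hb0 x))
    obtain ⟨hDint, hABD⟩ :
        Integrable (fun x => a x * b x * (log (b x) - log c)) ν ∧
        (∫ x, a x * b x * log (b x) ∂ν) - (∫ x, a x * (b x / c) ∂ν) * c * log c
          = ∫ x, a x * b x * (log (b x) - log c) ∂ν := by
      by_cases hc1 : c = 1
      · subst hc1
        constructor
        · simp only [Real.log_one, sub_zero]; exact h1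
        · simp only [Real.log_one, mul_zero, sub_zero]
      · -- c ≠ 1 : a * b is integrable
        have hlc : 0 < |log c| := by
          rw [abs_pos]
          intro h
          rcases (Real.log_eq_zero).1 h with h' | h' | h' <;> [exact hcpos.ne' h'; exact hc1 h';
            linarith]
        set δ : ℝ := min (|log c| / 2) (1/2) with hδ
        have hδpos : 0 < δ := lt_min (by positivity) (by norm_num)
        have hkey2 : ∀ t : ℝ, 0 < t → δ ≤ |log t| + |t / c - 1| := by
          intro t ht
          rcases lt_or_ge (t / c) (1/2) with hs | hs
          · have h12 : (1:ℝ)/2 ≤ |t / c - 1| := by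
              rw [abs_sub_comm, abs_of_nonneg (by linarith)]
              linarith
            calc δ ≤ 1/2 := min_le_right _ _
              _ ≤ |t / c - 1| := h12
              _ ≤ |log t| + |t / c - 1| := le_add_of_nonneg_left (abs_nonneg _)
          · have hs0 : 0 < t / c := div_pos ht hcpos
            have hlog2 : |log (t / c)| ≤ 2 * |t / c - 1| := by
              rcases le_or_gt 1 (t / c) with h1s | h1s
              · rw [abs_of_nonneg (Real.log_nonneg h1s), abs_of_nonneg (by linarith)]
                have := Real.log_le_sub_one_of_pos hs0; linarith
              · rw [abs_of_nonpos (Real.log_nonpos hs0.le h1s.le), abs_of_nonpos (by linarith)]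
                have h' := Real.log_le_sub_one_of_pos (inv_pos.2 hs0)
                rw [Real.log_inv] at h'
                have h'' : (t / c)⁻¹ - 1 ≤ 2 * (1 - t / c) := by
                  rw [inv_eq_one_div]
                  rw [div_sub' hs0.ne', div_le_iff₀ hs0]
                  nlinarith
                linarith
            have hld : log (t / c) = log t - log c := Real.log_div ht.ne' hcpos.ne'
            have htri : |log c| ≤ |log t| + |log (t / c)| := by
              have : log c = log t - log (t / c) := by rw [hld]; ring
              calc |log c| = |log t - log (t / c)| := by rw [← this]
                _ ≤ |log t| + |log (t / c)| := by
                    rw [sub_eq_add_neg]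
                    exact (abs_add_le _ _).trans (by rw [abs_neg])
            calc δ ≤ |log c| / 2 := min_le_left _ _
              _ ≤ |log t| + |t / c - 1| := by
                  have h0 : 0 ≤ |log t| := abs_nonneg _
                  linarith
        have hab : Integrable (fun x => a x * b x) ν := by
          refine Integrable.mono' ((h1.abs.add h3.abs).const_mul δ⁻¹)
            ((ham.mul hbm).aestronglyMeasurable) (Filter.Eventually.of_forall fun x => ?_)
          have hab0 : 0 ≤ a x * b x := mul_nonneg (ha0 x) (hb0 x)
          rw [Real.norm_eq_abs, abs_of_nonneg hab0]
          rcases eq_or_lt_of_le (hb0 x) with h | h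
          · rw [← h]
            simp [abs_nonneg]
            positivity
          · have h2 := hkey2 (b x) h
            have h3' : a x * b x * δ ≤ a x * b x * (|log (b x)| + |b x / c - 1|) :=
              mul_le_mul_of_nonneg_left h2 hab0
            calc a x * b x = δ⁻¹ * (a x * b x * δ) := by
                  field_simp
              _ ≤ δ⁻¹ * (a x * b x * (|log (b x)| + |b x / c - 1|)) := by
                  exact mul_le_mul_of_nonneg_left h3' (inv_nonneg.2 hδpos.le)
              _ = δ⁻¹ * (|a x * b x * log (b x)| + |a x * b x * (b x / c - 1)|) := by
                  rw [abs_mul (a x * b x) (log (b x)), abs_mul (a x * b x) (b x / c - 1), abs_of_nonneg hab0]; ring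
        have hBeq : (∫ x, a x * (b x / c) ∂ν) * c * log c
            = (∫ x, a x * b x ∂ν) * log c := by
          have he : (fun x => a x * (b x / c)) = fun x => (a x * b x) / c := by
            funext x; ring
          rw [he, integral_div, div_mul_cancel₀ _ hcpos.ne']
        have hsub : (fun x => a x * b x * (log (b x) - log c))
            = fun x => a x * b x * log (b x) - (a x * b x) * log c := by
          funext x; ring
        constructor
        · rw [hsub]; exact h1.sub (hab.mul_const _)
        · rw [hBeq, hsub, integral_sub h1 (hab.mul_const _), integral_mul_const]
    refine ⟨?_, ?_, ?_⟩
    · rw [hABD]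
      exact integral_mono hDint h3 key
    · intro heq
      rw [hABD] at heq
      have hnn : 0 ≤ᵐ[ν]
          fun x => a x * b x * (b x / c - 1) - a x * b x * (log (b x) - log c) :=
        Filter.Eventually.of_forall fun x => sub_nonneg.2 (key x)
      have hzero : ∫ x, (a x * b x * (b x / c - 1) - a x * b x * (log (b x) - log c)) ∂ν
          = 0 := by
        rw [integral_sub h3 hDint, ← heq, sub_self]
      have hae0 := (integral_eq_zero_iff_of_nonneg_ae hnn (h3.sub hDint)).1 hzero
      filter_upwards [hae0] with x hx hbx
      have hx' : a x * b x * (b x / c - 1) - a x * b x * (log (b x) - log c) = 0 := hx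
      have hs0 : 0 < b x / c := div_pos hbx hcpos
      have hld : log (b x) - log c = log (b x / c) := (Real.log_div hbx.ne' hcpos.ne').symm
      rw [hld] at hx'
      rcases eq_or_lt_of_le (ha0 x) with ha | ha
      · rw [← ha, zero_mul]
      · by_cases hbc : b x / c = 1
        · rw [hbc]; ring
        · exfalso
          have hstrict := Real.log_lt_sub_one_of_pos hs0 hbc
          have habpos : 0 < a x * b x := mul_pos ha hbx
          nlinarith
    · intro hcond'
      have hDzero : ∫ x, a x * b x * (log (b x) - log c) ∂ν = 0 := by
        rw [show (0:ℝ) = ∫ _x, (0:ℝ) ∂ν from (integral_zero _ _).symm]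
        refine integral_congr_ae ?_
        filter_upwards [hcond'] with x hx
        rcases eq_or_lt_of_le (hb0 x) with h | h
        · rw [← h]; simp
        · rcases mul_eq_zero.1 (hx h) with ha | hbc
          · rw [ha]; simp
          · have : b x / c = 1 := by linarith
            have hbc' : b x = c := (div_eq_one_iff_eq hcpos.ne').1 this
            rw [hbc', sub_self, mul_zero]
      linarith [hABD, hDzero]

/-- **Bounds on conditional weighted entropy for triples.** For a joint probability
density `f` on `X₁ × X₂ × X₃` with pair marginal `f₂₃` and reduced weight function
`ψ₂₃(q) = ∫ φ(x₁,q) f_{1|23}(x₁|q) dν₁`, if `∫ φ f (f_{1|23} - 1) ≤ 0` then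
`h^w_φ(X₁,X₂,X₃) = -∫ φ f log f ≥ -∫ ψ₂₃ f₂₃ log f₂₃ = h^w_{ψ₂₃}(X₂,X₃)`,
with equality iff `φ (f_{1|23} - 1) = 0` for `f`-almost all points. -/
theorem weighted_entropy_triple_ge_pair
    {X₁ X₂ X₃ : Type*} [MeasurableSpace X₁] [MeasurableSpace X₂] [MeasurableSpace X₃]
    (ν₁ : Measure X₁) (ν₂ : Measure X₂) (ν₃ : Measure X₃)
    [SigmaFinite ν₁] [SigmaFinite ν₂] [SigmaFinite ν₃]
    (f φ : X₁ × X₂ × X₃ → ℝ)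
    (hfm : Measurable f) (hφm : Measurable φ)
    (hf0 : ∀ p, 0 ≤ f p) (hφ0 : ∀ p, 0 ≤ φ p)
    (hfprob : ∫ p, f p ∂(ν₁.prod (ν₂.prod ν₃)) = 1)
    (f₂₃ : X₂ × X₃ → ℝ) (hf₂₃ : ∀ q, f₂₃ q = ∫ x₁, f (x₁, q) ∂ν₁)
    (ψ₂₃ : X₂ × X₃ → ℝ)
    (hψ₂₃ : ∀ q, ψ₂₃ q = ∫ x₁, φ (x₁, q) * (f (x₁, q) / f₂₃ q) ∂ν₁)
    (hint1 : Integrable (fun p => φ p * f p * log (f p)) (ν₁.prod (ν₂.prod ν₃)))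
    (hint2 : Integrable (fun q => ψ₂₃ q * f₂₃ q * log (f₂₃ q)) (ν₂.prod ν₃))
    (hint3 : Integrable (fun p => φ p * f p * (f p / f₂₃ p.2 - 1)) (ν₁.prod (ν₂.prod ν₃)))
    (hcond : ∫ p, φ p * f p * (f p / f₂₃ p.2 - 1) ∂(ν₁.prod (ν₂.prod ν₃)) ≤ 0) :
    (-∫ q, ψ₂₃ q * f₂₃ q * log (f₂₃ q) ∂(ν₂.prod ν₃))
        ≤ -∫ p, φ p * f p * log (f p) ∂(ν₁.prod (ν₂.prod ν₃)) ∧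
      ((-∫ p, φ p * f p * log (f p) ∂(ν₁.prod (ν₂.prod ν₃)))
          = -∫ q, ψ₂₃ q * f₂₃ q * log (f₂₃ q) ∂(ν₂.prod ν₃) ↔
        ∀ᵐ p ∂(ν₁.prod (ν₂.prod ν₃)), 0 < f p → φ p * (f p / f₂₃ p.2 - 1) = 0) := by
  have hfint : Integrable f (ν₁.prod (ν₂.prod ν₃)) := by
    by_contra h
    rw [integral_undef h] at hfprob
    norm_num at hfprob
  -- slice integrals
  have hGAint : Integrable
      (fun q => ∫ x, φ (x, q) * f (x, q) * log (f (x, q)) ∂ν₁) (ν₂.prod ν₃) :=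
    hint1.integral_prod_right
  have hGCint : Integrable
      (fun q => ∫ x, φ (x, q) * f (x, q) * (f (x, q) / f₂₃ q - 1) ∂ν₁) (ν₂.prod ν₃) :=
    hint3.integral_prod_right
  have hI : ∫ p, φ p * f p * log (f p) ∂(ν₁.prod (ν₂.prod ν₃))
      = ∫ q, (∫ x, φ (x, q) * f (x, q) * log (f (x, q)) ∂ν₁) ∂(ν₂.prod ν₃) :=
    integral_prod_symm _ hint1
  have hK : ∫ p, φ p * f p * (f p / f₂₃ p.2 - 1) ∂(ν₁.prod (ν₂.prod ν₃))
      = ∫ q, (∫ x, φ (x, q) * f (x, q) * (f (x, q) / f₂₃ q - 1) ∂ν₁) ∂(ν₂.prod ν₃) :=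
    integral_prod_symm _ hint3
  -- a.e. slice statement
  have hae : ∀ᵐ q ∂(ν₂.prod ν₃),
      ((∫ x, φ (x, q) * f (x, q) * log (f (x, q)) ∂ν₁)
          - ψ₂₃ q * f₂₃ q * log (f₂₃ q)
          ≤ ∫ x, φ (x, q) * f (x, q) * (f (x, q) / f₂₃ q - 1) ∂ν₁)
      ∧ ((∫ x, φ (x, q) * f (x, q) * log (f (x, q)) ∂ν₁)
          - ψ₂₃ q * f₂₃ q * log (f₂₃ q)
          = ∫ x, φ (x, q) * f (x, q) * (f (x, q) / f₂₃ q - 1) ∂ν₁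
          → ∀ᵐ x ∂ν₁, 0 < f (x, q) → φ (x, q) * (f (x, q) / f₂₃ q - 1) = 0)
      ∧ ((∀ᵐ x ∂ν₁, 0 < f (x, q) → φ (x, q) * (f (x, q) / f₂₃ q - 1) = 0)
          → (∫ x, φ (x, q) * f (x, q) * log (f (x, q)) ∂ν₁)
            = ψ₂₃ q * f₂₃ q * log (f₂₃ q)) := by
    filter_upwards [hint1.prod_left_ae, hint3.prod_left_ae, hfint.prod_left_ae]
      with q hq1 hq3 hqf
    have hres := wslice_aux ν₁ (fun x => φ (x, q)) (fun x => f (x, q))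
      (hφm.comp measurable_prodMk_right) (hfm.comp measurable_prodMk_right)
      (fun x => hφ0 _) (fun x => hf0 _) (f₂₃ q) hqf (hf₂₃ q).symm hq1 hq3
    rw [← hψ₂₃ q] at hres
    exact hres
  -- main inequality at the level of pair integrals
  have hsub_int : Integrable (fun q =>
      (∫ x, φ (x, q) * f (x, q) * log (f (x, q)) ∂ν₁)
        - ψ₂₃ q * f₂₃ q * log (f₂₃ q)
        - ∫ x, φ (x, q) * f (x, q) * (f (x, q) / f₂₃ q - 1) ∂ν₁) (ν₂.prod ν₃) :=
    (hGAint.sub hint2).sub hGCint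
  have hsub_le : ∫ q, ((∫ x, φ (x, q) * f (x, q) * log (f (x, q)) ∂ν₁)
        - ψ₂₃ q * f₂₃ q * log (f₂₃ q)
        - ∫ x, φ (x, q) * f (x, q) * (f (x, q) / f₂₃ q - 1) ∂ν₁) ∂(ν₂.prod ν₃) ≤ 0 := by
    refine integral_nonpos_of_ae ?_
    filter_upwards [hae] with q hq
    have := hq.1
    simp only [Pi.zero_apply]
    linarith
  have hABint : Integrable (fun q =>
      (∫ x, φ (x, q) * f (x, q) * log (f (x, q)) ∂ν₁)
        - ψ₂₃ q * f₂₃ q * log (f₂₃ q)) (ν₂.prod ν₃) := hGAint.sub hint2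
  have hIJK : ∫ q, ((∫ x, φ (x, q) * f (x, q) * log (f (x, q)) ∂ν₁)
        - ψ₂₃ q * f₂₃ q * log (f₂₃ q)
        - ∫ x, φ (x, q) * f (x, q) * (f (x, q) / f₂₃ q - 1) ∂ν₁) ∂(ν₂.prod ν₃)
      = (∫ p, φ p * f p * log (f p) ∂(ν₁.prod (ν₂.prod ν₃)))
        - (∫ q, ψ₂₃ q * f₂₃ q * log (f₂₃ q) ∂(ν₂.prod ν₃))
        - ∫ p, φ p * f p * (f p / f₂₃ p.2 - 1) ∂(ν₁.prod (ν₂.prod ν₃)) := by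
    rw [integral_sub hABint hGCint, integral_sub hGAint hint2, hI, hK]
  -- measurability of the equality-condition set
  have hf₂₃m : Measurable f₂₃ := by
    have he : f₂₃ = fun q => ∫ x, f (x, q) ∂ν₁ := funext hf₂₃
    rw [he]
    exact (hfm.stronglyMeasurable.integral_prod_left' (μ := ν₁)).measurable
  have hPset : MeasurableSet
      {p : X₁ × X₂ × X₃ | 0 < f p → φ p * (f p / f₂₃ p.2 - 1) = 0} := by
    have hg : Measurable fun p : X₁ × X₂ × X₃ => φ p * (f p / f₂₃ p.2 - 1) :=
      hφm.mul ((hfm.div (hf₂₃m.comp measurable_snd)).sub measurable_const)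
    have he : {p : X₁ × X₂ × X₃ | 0 < f p → φ p * (f p / f₂₃ p.2 - 1) = 0}
        = {p : X₁ × X₂ × X₃ | 0 < f p}ᶜ
          ∪ {p : X₁ × X₂ × X₃ | φ p * (f p / f₂₃ p.2 - 1) = 0} := by
      ext p
      by_cases h : 0 < f p <;> simp [h]
    rw [he]
    exact ((measurableSet_lt measurable_const hfm).compl).union
      (hg (measurableSet_singleton 0))
  have hswapset : MeasurableSet
      {z : (X₂ × X₃) × X₁ | 0 < f (z.2, z.1) → φ (z.2, z.1) * (f (z.2, z.1) / f₂₃ (z.2, z.1).2 - 1) = 0} :=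
    measurable_swap hPset
  have hmapeq : Measure.map Prod.swap ((ν₂.prod ν₃).prod ν₁) = ν₁.prod (ν₂.prod ν₃) :=
    Measure.prod_swap
  constructor
  · -- main inequality
    have hIleJ : ∫ p, φ p * f p * log (f p) ∂(ν₁.prod (ν₂.prod ν₃))
        ≤ ∫ q, ψ₂₃ q * f₂₃ q * log (f₂₃ q) ∂(ν₂.prod ν₃) := by
      rw [hIJK] at hsub_le
      linarith
    linarith
  · constructor
    · -- equality → a.e. condition
      intro heq
      have hIJ : ∫ p, φ p * f p * log (f p) ∂(ν₁.prod (ν₂.prod ν₃))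
          = ∫ q, ψ₂₃ q * f₂₃ q * log (f₂₃ q) ∂(ν₂.prod ν₃) := by linarith
      have hKge : (0:ℝ) ≤ -∫ p, φ p * f p * (f p / f₂₃ p.2 - 1) ∂(ν₁.prod (ν₂.prod ν₃)) := by
        linarith
      have hzero : ∫ q, ((∫ x, φ (x, q) * f (x, q) * log (f (x, q)) ∂ν₁)
          - ψ₂₃ q * f₂₃ q * log (f₂₃ q)
          - ∫ x, φ (x, q) * f (x, q) * (f (x, q) / f₂₃ q - 1) ∂ν₁) ∂(ν₂.prod ν₃) = 0 := by
        rw [hIJK]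
        rw [hIJK] at hsub_le
        linarith
      -- nonneg version
      have hnn : 0 ≤ᵐ[ν₂.prod ν₃] fun q =>
          -((∫ x, φ (x, q) * f (x, q) * log (f (x, q)) ∂ν₁)
            - ψ₂₃ q * f₂₃ q * log (f₂₃ q)
            - ∫ x, φ (x, q) * f (x, q) * (f (x, q) / f₂₃ q - 1) ∂ν₁) := by
        filter_upwards [hae] with q hq
        have := hq.1
        simp only [Pi.zero_apply]
        linarith
      have hzero' : ∫ q, (-((∫ x, φ (x, q) * f (x, q) * log (f (x, q)) ∂ν₁)
            - ψ₂₃ q * f₂₃ q * log (f₂₃ q)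
            - ∫ x, φ (x, q) * f (x, q) * (f (x, q) / f₂₃ q - 1) ∂ν₁)) ∂(ν₂.prod ν₃) = 0 := by
        rw [integral_neg, hzero, neg_zero]
      have hae0 := (integral_eq_zero_iff_of_nonneg_ae hnn hsub_int.neg).1 hzero'
      have haeq : ∀ᵐ q ∂(ν₂.prod ν₃), ∀ᵐ x ∂ν₁,
          0 < f (x, q) → φ (x, q) * (f (x, q) / f₂₃ q - 1) = 0 := by
        filter_upwards [hae, hae0] with q hq hz
        have hz' : (∫ x, φ (x, q) * f (x, q) * log (f (x, q)) ∂ν₁)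
            - ψ₂₃ q * f₂₃ q * log (f₂₃ q)
            = ∫ x, φ (x, q) * f (x, q) * (f (x, q) / f₂₃ q - 1) ∂ν₁ := by
          have hz'' : -((∫ x, φ (x, q) * f (x, q) * log (f (x, q)) ∂ν₁)
            - ψ₂₃ q * f₂₃ q * log (f₂₃ q)
            - ∫ x, φ (x, q) * f (x, q) * (f (x, q) / f₂₃ q - 1) ∂ν₁) = 0 := hz
          linarith
        exact hq.2.1 hz'
      have h2 : ∀ᵐ z ∂((ν₂.prod ν₃).prod ν₁),
          0 < f (z.2, z.1) → φ (z.2, z.1) * (f (z.2, z.1) / f₂₃ (z.2, z.1).2 - 1) = 0 :=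
        (Measure.ae_prod_iff_ae_ae hswapset).2 haeq
      rw [← hmapeq]
      exact (ae_map_iff measurable_swap.aemeasurable hPset).2 h2
    · -- a.e. condition → equality
      intro hP
      rw [← hmapeq] at hP
      have h2 : ∀ᵐ z ∂((ν₂.prod ν₃).prod ν₁),
          0 < f (Prod.swap z) → φ (Prod.swap z) * (f (Prod.swap z) / f₂₃ (Prod.swap z).2 - 1) = 0 :=
        (ae_map_iff measurable_swap.aemeasurable hPset).1 hP
      have h3 : ∀ᵐ q ∂(ν₂.prod ν₃), ∀ᵐ x ∂ν₁,
          0 < f (x, q) → φ (x, q) * (f (x, q) / f₂₃ q - 1) = 0 :=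
        Measure.ae_ae_of_ae_prod h2
      have hGAB : ∀ᵐ q ∂(ν₂.prod ν₃),
          (∫ x, φ (x, q) * f (x, q) * log (f (x, q)) ∂ν₁)
            - ψ₂₃ q * f₂₃ q * log (f₂₃ q) = 0 := by
        filter_upwards [hae, h3] with q hq hx
        rw [hq.2.2 hx, sub_self]
      have hz : ∫ q, ((∫ x, φ (x, q) * f (x, q) * log (f (x, q)) ∂ν₁)
          - ψ₂₃ q * f₂₃ q * log (f₂₃ q)) ∂(ν₂.prod ν₃) = 0 := by
        rw [show (0:ℝ) = ∫ _q, (0:ℝ) ∂(ν₂.prod ν₃) from (integral_zero _ _).symm]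
        exact integral_congr_ae hGAB
      rw [integral_sub hGAint hint2] at hz
      rw [hI]
      linarith
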